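/- Let X be a compact metric space and T : X → X a continuous injective map. If (a_1, …, a_n) is an IN-tuple for T, then each a_i belongs to T(X), hence has a unique T-preimage, and the tuple (T⁻¹(a_1), …, T⁻¹(a_n)) is again an IN-tuple for T. -/
import Mathlib


open scoped ENNReal

/-- A finite set `J` of nonnegative integers is an independence set (of times) for the
tuple of sets `A` and the map `T`. -/
def IsIndepTimeSet {X : Type*} (T : X → X) {k : ℕ} (A : Fin k → Set X) (J : Finset ℕ) : Prop :=
  ∀ s : ℕ → Fin k, ∃ x : X, ∀ i ∈ J, T^[i] x ∈ A (s i)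

/-- `x` is an IN-tuple for `T`: every tuple of open neighbourhoods of its coordinates has
independence sets of arbitrarily large finite cardinality. -/
def IsINTuple {X : Type*} [TopologicalSpace X] (T : X → X) {k : ℕ} (x : Fin k → X) : Prop :=
  ∀ U : Fin k → Set X, (∀ j, IsOpen (U j)) → (∀ j, x j ∈ U j) →
    ∀ p : ℕ, ∃ J : Finset ℕ, p ≤ J.card ∧ IsIndepTimeSet T U J

/-- If `T` is continuous and injective and `(a 1, …, a n)` is an IN-tuple for `T`, then
each `a i` lies in `T(X)` and has a unique `T`-preimage, and the tuple of preimages is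
again an IN-tuple for `T`. -/
theorem statement5 {X : Type*} [MetricSpace X] [CompactSpace X]
    (T : X → X) (hT : Continuous T) (hinj : Function.Injective T)
    {n : ℕ} (a : Fin n → X) (h : IsINTuple T a) :
    (∀ i, a i ∈ Set.range T) ∧ (∀ i, ∃! y, T y = a i) ∧
      ∀ b : Fin n → X, (∀ i, T (b i) = a i) → IsINTuple T b := by
  have h1 : ∀ i, a i ∈ Set.range T := by
    intro i
    have hcl : IsClosed (Set.range T) := (isCompact_range hT).isClosed
    rw [← hcl.closure_eq, mem_closure_iff]
    intro U hU haU
    set W : Fin n → Set X := fun j => if j = i then U else Set.univ with hW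
    obtain ⟨J, hJcard, hJ⟩ := h W
      (by intro j; by_cases hj : j = i <;> simp [hW, hj, hU, isOpen_univ])
      (by intro j; by_cases hj : j = i <;> simp [hW, hj, haU]) 2
    have hm : ∃ m ∈ J, 1 ≤ m := by
      by_contra hc
      push_neg at hc
      have hsub : J ⊆ {0} := fun m hm => by
        simpa using Nat.lt_one_iff.mp (hc m hm)
      have := Finset.card_le_card hsub
      simp at this; omega
    obtain ⟨m, hmJ, hm1⟩ := hm
    obtain ⟨x, hx⟩ := hJ (fun _ => i)
    have hxm := hx m hmJ
    simp only [hW, if_pos rfl] at hxm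
    obtain ⟨k, rfl⟩ := Nat.exists_eq_add_of_le hm1
    refine ⟨T^[1 + k] x, hxm, ⟨T^[k] x, ?_⟩⟩
    rw [add_comm, Function.iterate_succ_apply']
  refine ⟨h1, fun i => ?_, ?_⟩
  · obtain ⟨y, hy⟩ := h1 i
    exact ⟨y, hy, fun z hz => hinj (hz.trans hy.symm)⟩
  · intro b hb U hUopen hbU p
    set V : Fin n → Set X := fun j => (T '' (U j)ᶜ)ᶜ with hV
    have hVopen : ∀ j, IsOpen (V j) := fun j =>
      ((((hUopen j).isClosed_compl.isCompact).image hT).isClosed).isOpen_compl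
    have haV : ∀ j, a j ∈ V j := by
      intro j
      simp only [hV, Set.mem_compl_iff, Set.mem_image, not_exists]
      rintro y ⟨hy, hTy⟩
      have : y = b j := hinj (hTy.trans (hb j).symm)
      exact hy (this ▸ hbU j)
    obtain ⟨J, hJcard, hJ⟩ := h V hVopen haV (p + 1)
    refine ⟨(J.filter (1 ≤ ·)).image (· - 1), ?_, ?_⟩
    · rw [Finset.card_image_of_injOn (fun x hx y hy hxy => by
        simp only [Finset.mem_coe, Finset.mem_filter] at hx hy; omega)]
      have : J.erase 0 ⊆ J.filter (1 ≤ ·) := by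
        intro m hm
        simp only [Finset.mem_erase] at hm
        simp only [Finset.mem_filter]
        exact ⟨hm.2, by omega⟩
      have h2 := Finset.card_le_card this
      have h3 := Finset.pred_card_le_card_erase (a := 0) (s := J)
      omega
    · intro s
      obtain ⟨x, hx⟩ := hJ (fun i => s (i - 1))
      refine ⟨x, fun i hi => ?_⟩
      simp only [Finset.mem_image, Finset.mem_filter] at hi
      obtain ⟨m, ⟨hmJ, hm1⟩, hmi⟩ := hi
      have hmeq : m = i + 1 := by omega
      subst hmeq
      have hxi := hx (i + 1) hmJ
      simp only [Nat.add_sub_cancel] at hxi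
      rw [Function.iterate_succ_apply'] at hxi
      simp only [hV, Set.mem_compl_iff, Set.mem_image, not_exists] at hxi
      by_contra hcon
      exact hxi (T^[i] x) ⟨hcon, rfl⟩
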